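/- Under the hypotheses of the transformation rule L̄^i_{jk} = L^i_{jk} + δ^i_j ψ_k + δ^i_k ψ_j + (f̄^i_j σ̄_k + f̄^i_k σ̄_j) - (f^i_j σ_k + f^i_k σ_j) + (φ̄^i_{jk} - φ^i_{jk}) (with φ, φ̄ symmetric in the lower indices, ψ_k = ū_k - u_k), the generalized Thomas object T(L,f,σ,φ)^i_{jk} = L^i_{jk} - (f^i_j σ_k + f^i_k σ_j) - φ^i_{jk} - (1/(N+1)) { δ^i_j [Σ_α L^α_{kα} - (Σ_α f^α_k σ_α + f σ_k) - Σ_α φ^α_{kα}] + δ^i_k [Σ_α L^α_{jα} - (Σ_α f^α_j σ_α + f σ_j) - Σ_α φ^α_{jα}] } satisfies T(L̄, f̄, σ̄, φ̄)^i_{jk} = T(L, f, σ, φ)^i_{jk} for all i, j, k. -/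
import Mathlib


/-- The generalized Thomas object for the factored deformation. -/
noncomputable def genThomas {N : ℕ}
    (L : Fin N → Fin N → Fin N → ℝ) (f : Fin N → Fin N → ℝ)
    (σ : Fin N → ℝ) (φ : Fin N → Fin N → Fin N → ℝ)
    (i j k : Fin N) : ℝ :=
  L i j k - (f i j * σ k + f i k * σ j) - φ i j k -
    (1 / (N + 1 : ℝ)) *
      ((if i = j then (1:ℝ) else 0) *
        ((∑ α : Fin N, L α k α) -
         ((∑ α : Fin N, f α k * σ α) + (∑ α : Fin N, f α α) * σ k) -
         (∑ α : Fin N, φ α k α)) +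
       (if i = k then (1:ℝ) else 0) *
        ((∑ α : Fin N, L α j α) -
         ((∑ α : Fin N, f α j * σ α) + (∑ α : Fin N, f α α) * σ j) -
         (∑ α : Fin N, φ α j α)))

theorem stmt_7 (N : ℕ) (hN : 0 < N)
    (L L' : Fin N → Fin N → Fin N → ℝ)
    (hL : ∀ i j k, L i j k = L i k j)
    (hL' : ∀ i j k, L' i j k = L' i k j)
    (f f' : Fin N → Fin N → ℝ)
    (σ σ' u u' : Fin N → ℝ)
    (φ φ' : Fin N → Fin N → Fin N → ℝ)
    (hφ : ∀ i j k, φ i j k = φ i k j)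
    (hφ' : ∀ i j k, φ' i j k = φ' i k j)
    (htrans : ∀ i j k, L' i j k = L i j k +
      (if i = j then (1:ℝ) else 0) * (u' k - u k) +
      (if i = k then (1:ℝ) else 0) * (u' j - u j) +
      ((f' i j * σ' k + f' i k * σ' j) - (f i j * σ k + f i k * σ j)) +
      (φ' i j k - φ i j k)) :
    ∀ i j k, genThomas L' f' σ' φ' i j k = genThomas L f σ φ i j k := by
  have hne : (N + 1 : ℝ) ≠ 0 := by positivity
  have hsum : ∀ m : Fin N, (∑ α : Fin N, L' α m α) =
      (∑ α : Fin N, L α m α) + (N + 1 : ℝ) * (u' m - u m) +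
      ((∑ α : Fin N, f' α m * σ' α) + (∑ α : Fin N, f' α α) * σ' m -
       ((∑ α : Fin N, f α m * σ α) + (∑ α : Fin N, f α α) * σ m)) +
      ((∑ α : Fin N, φ' α m α) - (∑ α : Fin N, φ α m α)) := by
    intro m
    simp only [htrans, ite_mul, one_mul, zero_mul, eq_self_iff_true, if_true]
    rw [Finset.sum_add_distrib, Finset.sum_add_distrib, Finset.sum_add_distrib,
      Finset.sum_add_distrib, Finset.sum_ite_eq' Finset.univ m (fun α => u' α - u α)]
    simp only [Finset.mem_univ, if_true, Finset.sum_const, Finset.card_univ,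
      Fintype.card_fin, nsmul_eq_mul, Finset.sum_sub_distrib, Finset.sum_mul, Finset.sum_add_distrib]
    ring
  intro i j k
  simp only [genThomas, htrans i j k, hsum j, hsum k]
  field_simp
  split_ifs <;> ring
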